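/- Let A ∈ ℝ^{n×n}, B ∈ ℝ^{n×m}, τ > 0, N ≥ 1 an integer, h = τ/N, a = |A|, b = |B|. Let u ∈ L^∞([0,τ]; ℝ^m) with ‖u‖ = sup_{0≤s<τ}|u(s)|, let x(t) solve ẋ = Ax + Bu with x(0) = x₀, and define the Euler iterates x_{j+1} = (I + hA)x_j + B∫_{jh}^{(j+1)h} u(s)ds for j = 0,…,N−1 with x_0 = x(0). Then |x_N − x(τ)| ≤ (h/2)·a·(exp(aτ) − 1)·exp(aτ)·|x(0)| + (h/2)·b·(a·τ·exp(aτ) + 1)·(exp(aτ) − 1)·‖u‖. -/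

import Mathlib

open MeasureTheory Real Set

set_option maxHeartbeats 1000000

lemma exp_sub_one_le_mul_exp (y : ℝ) : Real.exp y - 1 ≤ y * Real.exp y := by
  have h := mul_le_mul_of_nonneg_right (Real.add_one_le_exp (-y)) (Real.exp_pos y).le
  have h2 : Real.exp (-y) * Real.exp y = 1 := by rw [← Real.exp_add]; simp
  nlinarith [h, h2]

theorem stmt_2 {n m : ℕ} (τ : ℝ) (hτ : 0 < τ) (N : ℕ) (hN : 1 ≤ N)
    (h : ℝ) (hhN : h = τ / N)
    (A : EuclideanSpace ℝ (Fin n) →L[ℝ] EuclideanSpace ℝ (Fin n))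
    (B : EuclideanSpace ℝ (Fin m) →L[ℝ] EuclideanSpace ℝ (Fin n))
    (u : ℝ → EuclideanSpace ℝ (Fin m)) (hu : Measurable u)
    (huint : MeasureTheory.IntegrableOn u (Set.Icc (0:ℝ) τ))
    (U : ℝ) (hU : ∀ s ∈ Set.Ico (0:ℝ) τ, ‖u s‖ ≤ U)
    (x : ℝ → EuclideanSpace ℝ (Fin n))
    (hode : ∀ t ∈ Set.Icc (0:ℝ) τ, HasDerivAt x (A (x t) + B (u t)) t)
    (xs : ℕ → EuclideanSpace ℝ (Fin n)) (hxs0 : xs 0 = x 0)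
    (hxsrec : ∀ j < N,
      xs (j + 1) = xs j + h • A (xs j) +
        B (∫ s in ((j : ℝ) * h)..(((j : ℝ) + 1) * h), u s)) :
    ‖xs N - x τ‖ ≤
      h / 2 * ‖A‖ * (Real.exp (‖A‖ * τ) - 1) * Real.exp (‖A‖ * τ) * ‖x 0‖ +
      h / 2 * ‖B‖ * (‖A‖ * τ * Real.exp (‖A‖ * τ) + 1) *
        (Real.exp (‖A‖ * τ) - 1) * U := by
  have hNpos : (0:ℝ) < N := by
    have : 0 < N := Nat.lt_of_lt_of_le Nat.zero_lt_one hN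
    exact_mod_cast this
  have hh : 0 < h := by rw [hhN]; exact div_pos hτ hNpos
  have hNh : (N : ℝ) * h = τ := by rw [hhN]; field_simp
  set a := ‖A‖ with ha_def
  set b := ‖B‖ with hb_def
  have ha : 0 ≤ a := norm_nonneg _
  have hb : 0 ≤ b := norm_nonneg _
  have hU0 : 0 ≤ U := le_trans (norm_nonneg (u 0)) (hU 0 ⟨le_refl _, hτ⟩)
  set δ := ‖x 0‖ with hδ_def
  have hδ : 0 ≤ δ := norm_nonneg _
  set E := Real.exp (a * τ) with hE_def
  have hE1 : 1 ≤ E := Real.one_le_exp (by positivity)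
  set M := a * E * δ + b * U * (a * τ * E + 1) with hM_def
  have hEpos : 0 < E := Real.exp_pos _
  have hM0 : 0 ≤ M := by
    have : 0 ≤ a * τ * E + 1 := by positivity
    positivity
  -- continuity of x on [0, τ]
  have hxc : ContinuousOn x (Icc 0 τ) := fun t ht =>
    ((hode t ht).continuousAt).continuousWithinAt
  -- pointwise derivative norm bound via Grönwall
  have hderiv_le : ∀ s ∈ Ico (0:ℝ) τ, ‖A (x s) + B (u s)‖ ≤ a * ‖x s‖ + b * U := by
    intro s hs
    calc ‖A (x s) + B (u s)‖ ≤ ‖A (x s)‖ + ‖B (u s)‖ := norm_add_le _ _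
      _ ≤ a * ‖x s‖ + b * U := add_le_add (A.le_opNorm _)
          (le_trans (B.le_opNorm _) (mul_le_mul_of_nonneg_left (hU s hs) hb))
  have hgron : ∀ t ∈ Icc (0:ℝ) τ, ‖x t‖ ≤ gronwallBound δ a (b * U) t := by
    intro t ht
    have := norm_le_gronwallBound_of_norm_deriv_right_le (f := x)
      (f' := fun s => A (x s) + B (u s)) (δ := δ) (K := a) (ε := b * U)
      (a := 0) (b := τ) hxc
      (fun s hs => (hode s (Ico_subset_Icc_self hs)).hasDerivWithinAt)
      le_rfl hderiv_le t ht
    simpa using this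
  have hE2 : E ≤ a * τ * E + 1 := by
    have := exp_sub_one_le_mul_exp (a * τ)
    rw [← hE_def] at this
    linarith
  have hdb : ∀ s ∈ Ico (0:ℝ) τ, ‖A (x s) + B (u s)‖ ≤ M := by
    intro s hs
    refine le_trans (hderiv_le s hs) ?_
    have hg := hgron s (Ico_subset_Icc_self hs)
    rcases eq_or_lt_of_le ha with ha0 | ha0
    · rw [hM_def, ← ha0]
      simp only [zero_mul, zero_add, zero_mul, mul_one]
      nlinarith
    · rw [gronwallBound_of_K_ne_0 ha0.ne'] at hg
      have hexp : Real.exp (a * s) ≤ E := by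
        rw [hE_def]
        exact Real.exp_le_exp.2 (mul_le_mul_of_nonneg_left hs.2.le ha)
      have hkey : a * (δ * Real.exp (a * s) + b * U / a * (Real.exp (a * s) - 1))
          = a * δ * Real.exp (a * s) + b * U * (Real.exp (a * s) - 1) := by
        field_simp
      have hxb : a * ‖x s‖ ≤ a * δ * Real.exp (a * s) + b * U * (Real.exp (a * s) - 1) := by
        rw [← hkey]
        exact mul_le_mul_of_nonneg_left hg ha0.le
      have h1 : 0 ≤ a * δ + b * U := by positivity
      nlinarith [mul_le_mul_of_nonneg_left hexp h1,
        mul_le_mul_of_nonneg_left hE2 (mul_nonneg hb hU0)]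
  -- integrability helpers
  have hsub : ∀ {c d : ℝ}, 0 ≤ c → c ≤ d → d ≤ τ → Set.uIcc c d ⊆ Icc 0 τ := by
    intro c d h0 hcd hdτ
    rw [Set.uIcc_of_le hcd]
    exact Icc_subset_Icc h0 hdτ
  have huic : ∀ c d : ℝ, 0 ≤ c → c ≤ d → d ≤ τ → IntervalIntegrable u volume c d :=
    fun c d h0 hcd hdτ => (huint.mono_set (hsub h0 hcd hdτ)).intervalIntegrable
  have hxint : ∀ c d : ℝ, 0 ≤ c → c ≤ d → d ≤ τ → IntervalIntegrable x volume c d :=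
    fun c d h0 hcd hdτ => (hxc.mono (hsub h0 hcd hdτ)).intervalIntegrable
  have hAxint : ∀ c d : ℝ, 0 ≤ c → c ≤ d → d ≤ τ →
      IntervalIntegrable (fun s => A (x s)) volume c d :=
    fun c d h0 hcd hdτ =>
      ((A.continuous.comp_continuousOn hxc).mono (hsub h0 hcd hdτ)).intervalIntegrable
  have hBuint : ∀ c d : ℝ, 0 ≤ c → c ≤ d → d ≤ τ →
      IntervalIntegrable (fun s => B (u s)) volume c d := by
    intro c d h0 hcd hdτ
    have h1 : IntegrableOn u (Set.uIcc c d) := huint.mono_set (hsub h0 hcd hdτ)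
    have h2 : IntegrableOn (fun s => B (u s)) (Set.uIcc c d) := B.integrable_comp h1
    exact h2.intervalIntegrable
  have hFTC : ∀ c d : ℝ, 0 ≤ c → c ≤ d → d ≤ τ →
      x d - x c = ∫ s in c..d, (A (x s) + B (u s)) := by
    intro c d h0 hcd hdτ
    exact (intervalIntegral.integral_eq_sub_of_hasDerivAt
      (fun t ht => hode t ((hsub h0 hcd hdτ) ht))
      ((hAxint c d h0 hcd hdτ).add (hBuint c d h0 hcd hdτ))).symm
  have hne : ∀ᵐ t ∂(volume : Measure ℝ), t ≠ τ := by
    rw [ae_iff]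
    have : {t : ℝ | ¬ t ≠ τ} = {τ} := by ext t; simp
    rw [this]
    exact measure_singleton τ
  -- Lipschitz-type bound on x
  have hlip : ∀ c d : ℝ, 0 ≤ c → c ≤ d → d ≤ τ → ‖x d - x c‖ ≤ M * (d - c) := by
    intro c d h0 hcd hdτ
    rw [hFTC c d h0 hcd hdτ]
    have hae : ∀ᵐ t ∂(volume.restrict (Set.uIoc c d)), ‖A (x t) + B (u t)‖ ≤ M := by
      filter_upwards [ae_restrict_of_ae hne, ae_restrict_mem measurableSet_uIoc]
        with t htne htmem
      rw [Set.uIoc_of_le hcd] at htmem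
      exact hdb t ⟨h0.trans htmem.1.le, lt_of_le_of_ne (htmem.2.trans hdτ) htne⟩
    calc ‖∫ s in c..d, (A (x s) + B (u s))‖ ≤ |∫ _s in c..d, M| :=
          intervalIntegral.norm_integral_le_abs_of_norm_le hae intervalIntegrable_const
      _ = M * (d - c) := by
          rw [intervalIntegral.integral_const, smul_eq_mul,
            abs_of_nonneg (mul_nonneg (sub_nonneg.2 hcd) hM0)]
          ring
  have hintsub : ∀ c d : ℝ, (∫ s in c..d, (s - c)) = (d - c)^2 / 2 := by
    intro c d
    rw [intervalIntegral.integral_sub (continuous_id'.intervalIntegrable _ _)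
      (continuous_const.intervalIntegrable _ _)]
    simp only [integral_id, intervalIntegral.integral_const, smul_eq_mul]
    ring
  -- one-step error recursion
  have hstep : ∀ j, j < N →
      ‖xs (j+1) - x (((j:ℝ)+1)*h)‖ ≤
        (1 + h*a) * ‖xs j - x ((j:ℝ)*h)‖ + a * M * h^2 / 2 := by
    intro j hj
    set c : ℝ := (j:ℝ)*h with hc_def
    set d : ℝ := ((j:ℝ)+1)*h with hd_def
    have hdc : d - c = h := by rw [hc_def, hd_def]; ring
    have h0c : 0 ≤ c := by positivity
    have hcd : c ≤ d := by linarith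
    have hdτ : d ≤ τ := by
      have hj1 : ((j:ℝ)+1) ≤ (N:ℝ) := by exact_mod_cast hj
      calc d = ((j:ℝ)+1)*h := hd_def
        _ ≤ (N:ℝ)*h := by nlinarith
        _ = τ := hNh
    have hsplit : (∫ s in c..d, (A (x s) + B (u s)))
        = A (∫ s in c..d, x s) + B (∫ s in c..d, u s) := by
      rw [intervalIntegral.integral_add (hAxint c d h0c hcd hdτ) (hBuint c d h0c hcd hdτ),
        A.intervalIntegral_comp_comm (hxint c d h0c hcd hdτ),
        B.intervalIntegral_comp_comm (huic c d h0c hcd hdτ)]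
    have hconst : (∫ s in c..d, (x c - x s)) = (d - c) • x c - ∫ s in c..d, x s := by
      rw [intervalIntegral.integral_sub intervalIntegrable_const (hxint c d h0c hcd hdτ),
        intervalIntegral.integral_const]
    have hx_d : x d = x c + (A (∫ s in c..d, x s) + B (∫ s in c..d, u s)) := by
      have h1 := hFTC c d h0c hcd hdτ
      rw [hsplit] at h1
      rw [← h1]; abel
    have e1 : xs (j+1) - x d = ((xs j - x c) + h • A (xs j - x c))
        + A (∫ s in c..d, (x c - x s)) := by
      rw [hxsrec j hj, hx_d, hconst, A.map_sub, A.map_sub, A.map_smul, smul_sub, hdc]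
      abel
    have hI : ‖∫ s in c..d, (x c - x s)‖ ≤ M * h^2 / 2 := by
      have hae : ∀ᵐ t ∂(volume.restrict (Set.uIoc c d)), ‖x c - x t‖ ≤ M * (t - c) := by
        filter_upwards [ae_restrict_mem measurableSet_uIoc] with t htmem
        rw [Set.uIoc_of_le hcd] at htmem
        rw [norm_sub_rev]
        exact hlip c t h0c htmem.1.le (htmem.2.trans hdτ)
      have hgint : IntervalIntegrable (fun t => M * (t - c)) volume c d :=
        (continuous_const.mul (continuous_id.sub continuous_const)).intervalIntegrable _ _
      calc ‖∫ s in c..d, (x c - x s)‖ ≤ |∫ t in c..d, M * (t - c)| :=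
            intervalIntegral.norm_integral_le_abs_of_norm_le hae hgint
        _ = M * h^2 / 2 := by
            rw [intervalIntegral.integral_const_mul, hintsub, hdc,
              abs_of_nonneg (by positivity)]
            ring
    calc ‖xs (j+1) - x d‖
        ≤ ‖(xs j - x c) + h • A (xs j - x c)‖ + ‖A (∫ s in c..d, (x c - x s))‖ := by
          rw [e1]; exact norm_add_le _ _
      _ ≤ (1 + h*a) * ‖xs j - x c‖ + a * M * h^2 / 2 := by
          refine add_le_add ?_ ?_
          · calc ‖(xs j - x c) + h • A (xs j - x c)‖
                ≤ ‖xs j - x c‖ + ‖h • A (xs j - x c)‖ := norm_add_le _ _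
              _ ≤ ‖xs j - x c‖ + h * (a * ‖xs j - x c‖) := by
                  rw [norm_smul, Real.norm_eq_abs, abs_of_nonneg hh.le]
                  exact add_le_add_right
                    (mul_le_mul_of_nonneg_left (A.le_opNorm _) hh.le) _
              _ = (1 + h*a) * ‖xs j - x c‖ := by ring
          · calc ‖A (∫ s in c..d, (x c - x s))‖ ≤ a * ‖∫ s in c..d, (x c - x s)‖ :=
                A.le_opNorm _
              _ ≤ a * (M * h^2 / 2) := mul_le_mul_of_nonneg_left hI ha
              _ = a * M * h^2 / 2 := by ring
  -- global induction
  have hkey : ∀ j, j ≤ N → ‖xs j - x ((j:ℝ)*h)‖ ≤ M * h / 2 * ((1 + h*a)^j - 1) := by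
    intro j
    induction j with
    | zero => intro _; simp [hxs0]
    | succ j ih =>
      intro hjN
      have hj : j < N := hjN
      have h2 := ih (le_of_lt hj)
      have hfac : (0:ℝ) ≤ 1 + h*a := by positivity
      have hcast : ((j+1 : ℕ):ℝ) = (j:ℝ) + 1 := by push_cast; ring
      rw [hcast]
      calc ‖xs (j+1) - x (((j:ℝ)+1)*h)‖
          ≤ (1 + h*a) * ‖xs j - x ((j:ℝ)*h)‖ + a * M * h^2 / 2 := hstep j hj
        _ ≤ (1 + h*a) * (M * h / 2 * ((1 + h*a)^j - 1)) + a * M * h^2 / 2 :=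
            add_le_add_left (mul_le_mul_of_nonneg_left h2 hfac) _
        _ = M * h / 2 * ((1 + h*a)^(j+1) - 1) := by rw [pow_succ]; ring
  have hfin := hkey N le_rfl
  rw [hNh] at hfin
  have hpow : (1 + h*a)^N ≤ E := by
    calc (1 + h*a)^N ≤ (Real.exp (h*a))^N := by
          refine pow_le_pow_left₀ (by positivity) ?_ N
          linarith [Real.add_one_le_exp (h*a)]
      _ = Real.exp ((N:ℝ) * (h*a)) := by rw [← Real.exp_nat_mul]
      _ = E := by rw [hE_def]; congr 1; rw [← hNh]; ring
  have hb1 : M * h / 2 * ((1 + h*a)^N - 1) ≤ M * h / 2 * (E - 1) :=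
    mul_le_mul_of_nonneg_left (by linarith) (by positivity)
  have heq : M * h / 2 * (E - 1) =
      h / 2 * a * (E - 1) * E * δ + h / 2 * b * (a * τ * E + 1) * (E - 1) * U := by
    rw [hM_def]; ring
  linarith
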